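/- Let P_t be a Markov kernel on ℝᵈ admitting a strictly positive density p(t,x,z) with respect to Lebesgue measure, and suppose there exists c ≥ 1 such that for all x, y, z ∈ ℝᵈ and t ∈ (0,1], c⁻¹ (t^{−d/α} ∧ t/|x−z|^{d+α}) ≤ p(t,x,z) ≤ c (t^{−d/α} ∧ t/|x−z|^{d+α}). Then for all t ∈ (0,1] and x, y, z ∈ ℝᵈ, p(t,x,z)/p(t,y,z) ≤ 2^{d+α} c² (1 + |x−y|/t^{1/α})^{d+α}. -/

import Mathlib

open Set

private lemma stmt_9_aux {c K t S q U pv : ℝ} (hc : 0 < c) (hS : 0 < S) (hK : 0 < K)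
    (h1 : pv ≤ c * U) (h2 : U * S ≤ K * t) (h3 : c⁻¹ * (t / S) ≤ q) :
    pv ≤ K * c ^ 2 * q := by
  have hU : U ≤ K * t / S := by rw [le_div_iff₀ hS]; exact h2
  calc pv ≤ c * U := h1
    _ ≤ c * (K * t / S) := mul_le_mul_of_nonneg_left hU hc.le
    _ = K * c ^ 2 * (c⁻¹ * (t / S)) := by field_simp
    _ ≤ K * c ^ 2 * q := mul_le_mul_of_nonneg_left h3 (by positivity)

set_option maxHeartbeats 1000000 in
theorem stmt_9 {d : ℕ} (hd : 1 ≤ d) (α : ℝ) (hα : 1 ≤ α) (c : ℝ) (hc : 1 ≤ c)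
    (p : ℝ → EuclideanSpace ℝ (Fin d) → EuclideanSpace ℝ (Fin d) → ℝ)
    (hpos : ∀ t ∈ Ioc (0:ℝ) 1, ∀ x z, 0 < p t x z)
    (hlow : ∀ t ∈ Ioc (0:ℝ) 1, ∀ x z,
      ENNReal.ofReal c⁻¹ *
          min (ENNReal.ofReal (t ^ (-(d:ℝ) / α)))
            (ENNReal.ofReal t / ENNReal.ofReal (‖x - z‖ ^ ((d:ℝ) + α)))
        ≤ ENNReal.ofReal (p t x z))
    (hup : ∀ t ∈ Ioc (0:ℝ) 1, ∀ x z,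
      ENNReal.ofReal (p t x z) ≤
        ENNReal.ofReal c *
          min (ENNReal.ofReal (t ^ (-(d:ℝ) / α)))
            (ENNReal.ofReal t / ENNReal.ofReal (‖x - z‖ ^ ((d:ℝ) + α)))) :
    ∀ t ∈ Ioc (0:ℝ) 1, ∀ x y z,
      p t x z / p t y z ≤
        (2:ℝ) ^ ((d:ℝ) + α) * c ^ 2 *
          (1 + ‖x - y‖ / t ^ (1 / α)) ^ ((d:ℝ) + α) := by
  intro t ht x y z
  obtain ⟨ht0, ht1⟩ := ht
  have hα0 : (0:ℝ) < α := lt_of_lt_of_le one_pos hα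
  have hd0 : (0:ℝ) < d := by exact_mod_cast Nat.lt_of_lt_of_le Nat.zero_lt_one hd
  have hc0 : (0:ℝ) < c := lt_of_lt_of_le one_pos hc
  set β : ℝ := (d:ℝ) + α with hβdef
  have hβ0 : 0 < β := by positivity
  set T : ℝ := t ^ (1/α) with hTdef
  have hT0 : 0 < T := Real.rpow_pos_of_pos ht0 _
  have hta : 0 < t ^ (-(d:ℝ)/α) := Real.rpow_pos_of_pos ht0 _
  have hkey : t ^ (-(d:ℝ)/α) * T ^ β = t := by
    rw [hTdef, ← Real.rpow_mul ht0.le, ← Real.rpow_add ht0]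
    have h1 : -(d:ℝ)/α + 1/α*β = 1 := by
      rw [hβdef]; field_simp; ring
    rw [h1, Real.rpow_one]
  -- extracted real bounds
  have hup1 : ∀ x' z' : EuclideanSpace ℝ (Fin d),
      p t x' z' ≤ c * t ^ (-(d:ℝ)/α) := by
    intro x' z'
    have h := hup t ⟨ht0, ht1⟩ x' z'
    have h2 : ENNReal.ofReal (p t x' z') ≤ ENNReal.ofReal (c * t ^ (-(d:ℝ)/α)) := by
      refine h.trans ?_
      rw [ENNReal.ofReal_mul hc0.le]
      exact mul_le_mul_right (min_le_left _ _) _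
    exact (ENNReal.ofReal_le_ofReal_iff (by positivity)).mp h2
  have hup2 : ∀ x' z' : EuclideanSpace ℝ (Fin d), 0 < ‖x' - z'‖ →
      p t x' z' ≤ c * (t / ‖x' - z'‖ ^ β) := by
    intro x' z' hr
    have h := hup t ⟨ht0, ht1⟩ x' z'
    have h2 : ENNReal.ofReal (p t x' z') ≤ ENNReal.ofReal (c * (t / ‖x' - z'‖ ^ β)) := by
      refine h.trans ?_
      rw [ENNReal.ofReal_mul hc0.le, ENNReal.ofReal_div_of_pos (by positivity)]
      exact mul_le_mul_right (min_le_right _ _) _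
    exact (ENNReal.ofReal_le_ofReal_iff (by positivity)).mp h2
  have hlow1 : ∀ y' z' : EuclideanSpace ℝ (Fin d), ‖y' - z'‖ ≤ T →
      c⁻¹ * t ^ (-(d:ℝ)/α) ≤ p t y' z' := by
    intro y' z' hs
    have h := hlow t ⟨ht0, ht1⟩ y' z'
    have hmin : ENNReal.ofReal (t ^ (-(d:ℝ)/α)) ≤
        ENNReal.ofReal t / ENNReal.ofReal (‖y' - z'‖ ^ β) := by
      rcases eq_or_lt_of_le (norm_nonneg (y' - z')) with h0 | h0
      · rw [← h0, Real.zero_rpow hβ0.ne', ENNReal.ofReal_zero,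
          ENNReal.div_zero (ENNReal.ofReal_pos.mpr ht0).ne']
        exact le_top
      · rw [← ENNReal.ofReal_div_of_pos (by positivity)]
        apply ENNReal.ofReal_le_ofReal
        rw [le_div_iff₀ (by positivity)]
        calc t ^ (-(d:ℝ)/α) * ‖y' - z'‖ ^ β
            ≤ t ^ (-(d:ℝ)/α) * T ^ β := by gcongr
          _ = t := hkey
    rw [min_eq_left hmin, ← ENNReal.ofReal_mul (by positivity)] at h
    exact (ENNReal.ofReal_le_ofReal_iff (hpos t ⟨ht0, ht1⟩ y' z').le).mp h
  have hlow2 : ∀ y' z' : EuclideanSpace ℝ (Fin d), T ≤ ‖y' - z'‖ →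
      c⁻¹ * (t / ‖y' - z'‖ ^ β) ≤ p t y' z' := by
    intro y' z' hs
    have hs0 : 0 < ‖y' - z'‖ := lt_of_lt_of_le hT0 hs
    have h := hlow t ⟨ht0, ht1⟩ y' z'
    have hmin : ENNReal.ofReal t / ENNReal.ofReal (‖y' - z'‖ ^ β) ≤
        ENNReal.ofReal (t ^ (-(d:ℝ)/α)) := by
      rw [← ENNReal.ofReal_div_of_pos (by positivity)]
      apply ENNReal.ofReal_le_ofReal
      rw [div_le_iff₀ (by positivity)]
      calc t = t ^ (-(d:ℝ)/α) * T ^ β := hkey.symm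
        _ ≤ t ^ (-(d:ℝ)/α) * ‖y' - z'‖ ^ β := by gcongr
    rw [min_eq_right hmin, ← ENNReal.ofReal_div_of_pos (by positivity),
      ← ENNReal.ofReal_mul (by positivity)] at h
    exact (ENNReal.ofReal_le_ofReal_iff (hpos t ⟨ht0, ht1⟩ y' z').le).mp h
  -- main argument
  have hq : 0 < p t y z := hpos t ⟨ht0, ht1⟩ y z
  set δ : ℝ := ‖x - y‖ with hδdef
  have hδ0 : 0 ≤ δ := norm_nonneg _
  set A : ℝ := 1 + δ / T with hAdef
  have hA1 : (1:ℝ) ≤ A := by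
    have : 0 ≤ δ / T := by positivity
    rw [hAdef]; linarith
  have hA0 : 0 < A := lt_of_lt_of_le one_pos hA1
  clear_value β T δ A
  have h2β : (1:ℝ) ≤ 2 ^ β := by
    calc (1:ℝ) = 1 ^ β := (Real.one_rpow β).symm
      _ ≤ 2 ^ β := Real.rpow_le_rpow one_pos.le one_le_two hβ0.le
  have hAβ : (1:ℝ) ≤ A ^ β := by
    calc (1:ℝ) = 1 ^ β := (Real.one_rpow β).symm
      _ ≤ A ^ β := Real.rpow_le_rpow one_pos.le hA1 hβ0.le
  have hAβ0 : 0 < A ^ β := by positivity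
  have h2β0 : (0:ℝ) < 2 ^ β := by positivity
  have hK0 : (0:ℝ) < 2 ^ β * A ^ β := mul_pos h2β0 hAβ0
  have hK1 : (1:ℝ) ≤ 2 ^ β * A ^ β := by nlinarith
  have hTA : T * A = T + δ := by
    rw [hAdef]; field_simp
  have htri : ‖y - z‖ ≤ δ + ‖x - z‖ := by
    calc ‖y - z‖ = ‖(y - x) + (x - z)‖ := by abel_nf
      _ ≤ ‖y - x‖ + ‖x - z‖ := norm_add_le _ _
      _ = δ + ‖x - z‖ := by rw [hδdef, norm_sub_rev]
  rw [div_le_iff₀ hq]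
  have goal_eq : (2:ℝ) ^ β * c ^ 2 * A ^ β * p t y z
      = (2 ^ β * A ^ β) * c ^ 2 * p t y z := by ring
  rw [goal_eq]
  clear hlow hup hpos goal_eq
  rcases le_or_gt ‖y - z‖ T with hs | hs
  · -- s ≤ T : use S = T ^ β
    have hTβ0 : (0:ℝ) < T ^ β := by positivity
    refine stmt_9_aux (t := t) hc0 hTβ0 hK0 (hup1 x z) ?_ ?_
    · rw [hkey]
      have := mul_le_mul_of_nonneg_right hK1 ht0.le
      linarith
    · have heq : t ^ (-(d:ℝ)/α) = t / T ^ β := by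
        rw [eq_div_iff hTβ0.ne']; exact hkey
      rw [← heq]; exact hlow1 y z hs
  · -- T < s
    have hs0 : 0 < ‖y - z‖ := hT0.trans hs
    have hsβ0 : (0:ℝ) < ‖y - z‖ ^ β := by positivity
    rcases le_or_gt ‖x - z‖ T with hr | hr
    · -- r ≤ T
      have hsle : ‖y - z‖ ≤ T * A := by rw [hTA]; linarith
      have hsβ : ‖y - z‖ ^ β ≤ T ^ β * A ^ β := by
        calc ‖y - z‖ ^ β ≤ (T * A) ^ β := Real.rpow_le_rpow hs0.le hsle hβ0.le
          _ = T ^ β * A ^ β := Real.mul_rpow hT0.le hA0.le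
      refine stmt_9_aux (t := t) hc0 hsβ0 hK0 (hup1 x z) ?_ (hlow2 y z hs.le)
      calc t ^ (-(d:ℝ)/α) * ‖y - z‖ ^ β
          ≤ t ^ (-(d:ℝ)/α) * (T ^ β * A ^ β) := by gcongr
        _ = t * A ^ β := by rw [← mul_assoc, hkey]
        _ ≤ 2 ^ β * A ^ β * t := by
              have := mul_le_mul_of_nonneg_right h2β (mul_nonneg hAβ0.le ht0.le)
              nlinarith [this]
    · -- T < r
      have hr0 : 0 < ‖x - z‖ := hT0.trans hr
      have hrβ0 : (0:ℝ) < ‖x - z‖ ^ β := by positivity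
      have hsle : ‖y - z‖ ≤ 2 * A * ‖x - z‖ := by
        have h3 : δ * T ≤ δ * ‖x - z‖ := mul_le_mul_of_nonneg_left hr.le hδ0
        have h4 : 2 * A * ‖x - z‖ * T = 2 * ‖x - z‖ * (T + δ) := by
          rw [hAdef]; field_simp
        have h5 : ‖y - z‖ * T ≤ (δ + ‖x - z‖) * T := mul_le_mul_of_nonneg_right htri hT0.le
        have h6 : ‖y - z‖ * T ≤ 2 * A * ‖x - z‖ * T := by
          rw [h4]
          nlinarith [mul_nonneg hδ0 hr0.le, mul_nonneg hr0.le hT0.le]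
        exact le_of_mul_le_mul_right h6 hT0
      have hsβ : ‖y - z‖ ^ β ≤ 2 ^ β * A ^ β * ‖x - z‖ ^ β := by
        calc ‖y - z‖ ^ β ≤ (2 * A * ‖x - z‖) ^ β :=
              Real.rpow_le_rpow hs0.le hsle hβ0.le
          _ = 2 ^ β * A ^ β * ‖x - z‖ ^ β := by
              rw [Real.mul_rpow (by positivity) (norm_nonneg _),
                Real.mul_rpow (by norm_num) hA0.le]
      refine stmt_9_aux (t := t) hc0 hsβ0 hK0 (hup2 x z hr0) ?_ (hlow2 y z hs.le)
      calc t / ‖x - z‖ ^ β * ‖y - z‖ ^ β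
          ≤ t / ‖x - z‖ ^ β * (2 ^ β * A ^ β * ‖x - z‖ ^ β) := by gcongr
        _ = 2 ^ β * A ^ β * t := by field_simp
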